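/- Let X be a topological vector space, f : X → ℝ ∪ {+∞} proper, convex and continuous, α ∈ ℝ, and suppose {x : f(x) < α} ≠ ∅. Then for any x̄ with f(x̄) = α, the normal cone to the sublevel set {f ≤ α} at x̄ equals ℝ₊ ∂f(x̄), the set of nonnegative multiples of subgradients of f at x̄. -/

import Mathlib

def edom {X : Type*} (f : X → EReal) : Set X := {x | f x ≠ ⊤}

/-- Convexity of an `ℝ ∪ {+∞}`-valued function. -/
def ERealConvexOn {X : Type*} [AddCommGroup X] [Module ℝ X] (f : X → EReal) : Prop :=
  ∀ x y : X, ∀ t : ℝ, 0 ≤ t → t ≤ 1 →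
    f (t • x + (1 - t) • y) ≤ (t : EReal) * f x + ((1 - t : ℝ) : EReal) * f y

/-- Normal cone to `C` at `x̄`. -/
def NormalCone {X : Type*} [AddCommGroup X] [Module ℝ X] [TopologicalSpace X]
    (C : Set X) (xbar : X) : Set (X →L[ℝ] ℝ) :=
  {ℓ | ∀ x ∈ C, ℓ x ≤ ℓ xbar}

/-- Subdifferential of `f : X → ℝ ∪ {+∞}` at `x̄` (where `f x̄` is finite). -/
def SubdiffE {X : Type*} [AddCommGroup X] [Module ℝ X] [TopologicalSpace X]
    (f : X → EReal) (xbar : X) : Set (X →L[ℝ] ℝ) :=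
  {ℓ | ∀ x, ((ℓ x - ℓ xbar : ℝ) : EReal) + f xbar ≤ f x}

section Aux

variable {X : Type*} [AddCommGroup X] [Module ℝ X] [TopologicalSpace X]
  [IsTopologicalAddGroup X] [ContinuousSMul ℝ X]

/-- the strict epigraph is open -/
lemma strictEpi_isOpen (f : X → EReal) (hcont : Continuous f) :
    IsOpen {p : X × ℝ | f p.1 < (p.2 : EReal)} :=
  isOpen_lt (hcont.comp continuous_fst) (continuous_coe_real_ereal.comp continuous_snd)

/-- the strict epigraph is convex -/
lemma strictEpi_convex (f : X → EReal) (hbot : ∀ x, f x ≠ ⊥) (hconv : ERealConvexOn f) :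
    Convex ℝ {p : X × ℝ | f p.1 < (p.2 : EReal)} := by
  rintro ⟨x, r⟩ hxr ⟨y, q⟩ hyq a b ha hb hab
  simp only [Set.mem_setOf_eq] at hxr hyq ⊢
  obtain ⟨p, hp⟩ : ∃ p : ℝ, f x = (p : EReal) :=
    ⟨(f x).toReal, (EReal.coe_toReal (ne_top_of_lt hxr) (hbot x)).symm⟩
  obtain ⟨p', hp'⟩ : ∃ p' : ℝ, f y = (p' : EReal) :=
    ⟨(f y).toReal, (EReal.coe_toReal (ne_top_of_lt hyq) (hbot y)).symm⟩
  have hpr : p < r := by rwa [hp, EReal.coe_lt_coe_iff] at hxr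
  have hpq : p' < q := by rwa [hp', EReal.coe_lt_coe_iff] at hyq
  have hcv := hconv x y a ha (by linarith)
  rw [show (1:ℝ) - a = b by linarith] at hcv
  have h2 : (a • (x, r) + b • (y, q) : X × ℝ) = (a • x + b • y, a * r + b * q) := by
    simp [Prod.ext_iff, smul_eq_mul]
  rw [h2]
  have hstrict : a * p + b * p' < a * r + b * q := by
    rcases eq_or_lt_of_le ha with h | h
    · have hb1 : b = 1 := by linarith
      rw [← h, hb1]; simpa using hpq
    · nlinarith
  calc f (a • x + b • y) ≤ (a : EReal) * f x + ((b : ℝ) : EReal) * f y := hcv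
    _ = ((a * p + b * p' : ℝ) : EReal) := by
        rw [hp, hp', ← EReal.coe_mul, ← EReal.coe_mul, ← EReal.coe_add]
    _ < ((a * r + b * q : ℝ) : EReal) := by exact_mod_cast hstrict

/-- From a separating functional one builds a subgradient. -/
lemma subdiff_of_sep (f : X → EReal) (hbot : ∀ x, f x ≠ ⊥) (α : ℝ) (xbar : X)
    (hx : f xbar = (α : EReal)) (g : X →L[ℝ] ℝ) (s : ℝ) (hs : s < 0)
    (H : ∀ x, ∀ r : ℝ, f x < (r : EReal) → g x + s * r ≤ g xbar + s * α) :
    (-s)⁻¹ • g ∈ SubdiffE f xbar := by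
  intro x
  by_cases htop : f x = ⊤
  · rw [htop]; exact le_top
  obtain ⟨b, hb⟩ : ∃ b : ℝ, f x = (b : EReal) :=
    ⟨(f x).toReal, (EReal.coe_toReal htop (hbot x)).symm⟩
  have key : g x + s * b ≤ g xbar + s * α := by
    by_contra hlt
    push_neg at hlt
    set ε := (g x + s * b - (g xbar + s * α)) / (-s) / 2 with hεdef
    have hε0 : 0 < ε := by
      apply div_pos (div_pos (by linarith) (by linarith)); norm_num
    have hH := H x (b + ε) (by rw [hb]; exact_mod_cast lt_add_of_pos_right b hε0)
    have hsε : s * ε = -(g x + s * b - (g xbar + s * α)) / 2 := by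
      have hsne : s ≠ 0 := by linarith
      rw [hεdef]; field_simp
    have hexp : s * (b + ε) = s * b + s * ε := by ring
    linarith [hH, hexp, hsε]
  rw [hx, hb]
  have hreal : ((-s)⁻¹ • g) x - ((-s)⁻¹ • g) xbar + α ≤ b := by
    simp only [ContinuousLinearMap.smul_apply, smul_eq_mul]
    have hpos : (0:ℝ) < -s := by linarith
    rw [← mul_sub]
    have h1 : g x - g xbar ≤ (-s) * (b - α) := by nlinarith
    have h2 := (inv_mul_le_iff₀ hpos).mpr h1
    linarith
  exact_mod_cast hreal

end Aux

theorem normalCone_sublevel_eq_cone_subdiff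
    {X : Type*} [AddCommGroup X] [Module ℝ X] [TopologicalSpace X]
    [IsTopologicalAddGroup X] [ContinuousSMul ℝ X]
    (f : X → EReal) (hbot : ∀ x, f x ≠ ⊥) (hproper : (edom f).Nonempty)
    (hconv : ERealConvexOn f) (hcont : Continuous f)
    (α : ℝ) (hne : {x | f x < (α : EReal)}.Nonempty)
    (xbar : X) (hx : f xbar = (α : EReal)) :
    NormalCone {x | f x ≤ (α : EReal)} xbar =
      {ℓ | ∃ t : ℝ, 0 ≤ t ∧ ∃ ℓ₀ ∈ SubdiffE f xbar, ℓ = t • ℓ₀} := by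
  obtain ⟨x₀, hx₀⟩ := hne
  simp only [Set.mem_setOf_eq] at hx₀
  -- the strict epigraph
  set E : Set (X × ℝ) := {p : X × ℝ | f p.1 < (p.2 : EReal)} with hEdef
  have hEopen : IsOpen E := strictEpi_isOpen f hcont
  have hEconv : Convex ℝ E := strictEpi_convex f hbot hconv
  -- decompose a functional on X × ℝ
  have hdecomp : ∀ φ : (X × ℝ) →L[ℝ] ℝ, ∀ x : X, ∀ r : ℝ,
      φ (x, r) = φ.comp (ContinuousLinearMap.inl ℝ X ℝ) x + (φ (0, 1)) * r := by
    intro φ x r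
    have : (x, r) = (x, (0:ℝ)) + r • ((0:X), (1:ℝ)) := by
      simp [Prod.ext_iff]
    rw [this, map_add, map_smul]
    simp [ContinuousLinearMap.comp_apply, mul_comm]
  -- Step A : the subdifferential is nonempty
  have hA : (SubdiffE f xbar).Nonempty := by
    have hdisj : Disjoint E {((xbar, α) : X × ℝ)} := by
      rw [Set.disjoint_singleton_right]
      simp only [hEdef, Set.mem_setOf_eq, hx]
      exact lt_irrefl _
    obtain ⟨φ, u, hu1, hu2⟩ :=
      geometric_hahn_banach_open hEconv hEopen (convex_singleton _) hdisj
    set g := φ.comp (ContinuousLinearMap.inl ℝ X ℝ) with hgdef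
    set s := φ ((0:X), (1:ℝ)) with hsdef
    have hφ : ∀ x : X, ∀ r : ℝ, φ (x, r) = g x + s * r := fun x r => hdecomp φ x r
    have hub : u ≤ g xbar + s * α := by
      have := hu2 (xbar, α) rfl
      rwa [hφ] at this
    have hE1 : ∀ x : X, ∀ r : ℝ, f x < (r : EReal) → g x + s * r < u := by
      intro x r hr
      have := hu1 (x, r) hr
      rwa [hφ] at this
    have hs : s < 0 := by
      have h1 := hE1 xbar (α + 1) (by rw [hx]; exact_mod_cast lt_add_one α)
      nlinarith
    exact ⟨(-s)⁻¹ • g, subdiff_of_sep f hbot α xbar hx g s hs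
      (fun x r hr => le_trans (le_of_lt (hE1 x r hr)) hub)⟩
  ext ℓ
  simp only [NormalCone, SubdiffE, Set.mem_setOf_eq]
  constructor
  · -- hard direction
    intro hℓ
    by_cases hℓ0 : ℓ = 0
    · obtain ⟨ℓ₀, hℓ₀⟩ := hA
      exact ⟨0, le_refl _, ℓ₀, hℓ₀, by rw [hℓ0, zero_smul]⟩
    -- ℓ ≠ 0 : get v with ℓ v ≠ 0
    obtain ⟨v, hv⟩ : ∃ v, ℓ v ≠ 0 := by
      by_contra hc
      push_neg at hc
      exact hℓ0 (ContinuousLinearMap.ext fun z => by simp [hc z])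
    -- strict inequality on the open sublevel set
    have hstrict : ∀ x, f x < (α : EReal) → ℓ x < ℓ xbar := by
      intro x hxa
      rcases lt_or_eq_of_le (hℓ x (le_of_lt hxa)) with h | h
      · exact h
      exfalso
      -- x is an interior maximizer of ℓ on {f < α}
      have hUopen : IsOpen {z : X | f z < (α : EReal)} :=
        isOpen_lt hcont continuous_const
      have hmapcont : Continuous fun c : ℝ => x + c • v :=
        continuous_const.add (continuous_id.smul continuous_const)
      have hpre : IsOpen ((fun c : ℝ => x + c • v) ⁻¹' {z : X | f z < (α : EReal)}) :=
        hUopen.preimage hmapcont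
      have h0mem : (0:ℝ) ∈ (fun c : ℝ => x + c • v) ⁻¹' {z : X | f z < (α : EReal)} := by
        simp [hxa]
      obtain ⟨δ, hδ0, hδ⟩ := Metric.isOpen_iff.mp hpre 0 h0mem
      have hboth : ∀ c : ℝ, |c| < δ → c * ℓ v ≤ 0 := by
        intro c hc
        have hcm : c ∈ Metric.ball (0:ℝ) δ := by
          simpa [Real.dist_eq] using hc
        have hmem := hδ hcm
        simp only [Set.mem_preimage, Set.mem_setOf_eq] at hmem
        have := hℓ _ (le_of_lt hmem)
        rw [map_add, map_smul] at this
        rw [← h] at this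
        simpa using this
      have h1 := hboth (δ/2) (by rw [abs_of_pos (by linarith)]; linarith)
      have h2 := hboth (-(δ/2)) (by rw [abs_of_neg (by linarith)]; linarith)
      rcases lt_trichotomy (ℓ v) 0 with hv' | hv' | hv'
      · nlinarith [mul_neg_of_pos_of_neg (show (0:ℝ) < δ/2 by linarith) hv']
      · exact hv hv'
      · nlinarith [mul_pos (show (0:ℝ) < δ/2 by linarith) hv']
    -- The convex set to separate from E
    set M : Set (X × ℝ) := {p : X × ℝ | ℓ xbar ≤ ℓ p.1 ∧ p.2 ≤ α} with hMdef
    have hMconv : Convex ℝ M := by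
      rintro ⟨y1, r1⟩ ⟨h1a, h1b⟩ ⟨y2, r2⟩ ⟨h2a, h2b⟩ a b ha hb hab
      have h1a' : ℓ xbar ≤ ℓ y1 := h1a
      have h1b' : r1 ≤ α := h1b
      have h2a' : ℓ xbar ≤ ℓ y2 := h2a
      have h2b' : r2 ≤ α := h2b
      constructor
      · show ℓ xbar ≤ ℓ (a • (y1, r1) + b • (y2, r2)).1
        simp only [Prod.fst_add, Prod.smul_fst, map_add, map_smul, smul_eq_mul]
        have hsum : a * ℓ xbar + b * ℓ xbar = ℓ xbar := by rw [← add_mul, hab, one_mul]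
        linarith [mul_le_mul_of_nonneg_left h1a' ha, mul_le_mul_of_nonneg_left h2a' hb]
      · show (a • (y1, r1) + b • (y2, r2) : X × ℝ).2 ≤ α
        simp only [Prod.snd_add, Prod.smul_snd, smul_eq_mul]
        have hsum : a * α + b * α = α := by rw [← add_mul, hab, one_mul]
        linarith [mul_le_mul_of_nonneg_left h1b' ha, mul_le_mul_of_nonneg_left h2b' hb]
    have hdisj : Disjoint E M := by
      rw [Set.disjoint_left]
      rintro ⟨y, r⟩ hyE ⟨hy1, hy2⟩
      simp only [hEdef, Set.mem_setOf_eq] at hyE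
      have : f y < (α : EReal) :=
        lt_of_lt_of_le hyE (by exact_mod_cast hy2)
      exact absurd hy1 (not_le.mpr (hstrict y this))
    obtain ⟨φ, u, hu1, hu2⟩ := geometric_hahn_banach_open hEconv hEopen hMconv hdisj
    set g := φ.comp (ContinuousLinearMap.inl ℝ X ℝ) with hgdef
    set s := φ ((0:X), (1:ℝ)) with hsdef
    have hφ : ∀ x : X, ∀ r : ℝ, φ (x, r) = g x + s * r := fun x r => hdecomp φ x r
    have hE1 : ∀ x : X, ∀ r : ℝ, f x < (r : EReal) → g x + s * r < u := by
      intro x r hr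
      have := hu1 (x, r) hr
      rwa [hφ] at this
    have hM1 : ∀ x : X, ℓ xbar ≤ ℓ x → u ≤ g x + s * α := by
      intro x hxx
      have := hu2 (x, α) ⟨hxx, le_refl _⟩
      rwa [hφ] at this
    have hs : s < 0 := by
      have h1 := hE1 xbar (α + 1) (by rw [hx]; exact_mod_cast lt_add_one α)
      have h2 := hM1 xbar (le_refl _)
      nlinarith
    -- g xbar + s α ≤ u
    have hxu : g xbar + s * α ≤ u := by
      by_contra hlt
      push_neg at hlt
      set ε := (g xbar + s * α - u) / (-s) with hεdef
      have hε0 : 0 < ε := div_pos (by linarith) (by linarith)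
      have hH := hE1 xbar (α + ε) (by rw [hx]; exact_mod_cast lt_add_of_pos_right α hε0)
      have hsε : s * ε = -(g xbar + s * α - u) := by
        have hsne : -s ≠ 0 := by linarith
        rw [hεdef]; field_simp; rw [div_self (show s ≠ 0 by linarith)]
      nlinarith
    -- g is minimized at xbar on the halfspace
    have hmono : ∀ d : X, 0 ≤ ℓ d → 0 ≤ g d := by
      intro d hd
      have h1 := hM1 (xbar + d) (by rw [map_add]; linarith)
      rw [map_add] at h1
      linarith
    have hker : ∀ d : X, ℓ d = 0 → g d = 0 := by
      intro d hd
      have h1 := hmono d (le_of_eq hd.symm)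
      have h2 := hmono (-d) (by rw [map_neg, hd, neg_zero])
      rw [map_neg] at h2
      linarith
    -- g = lam • ℓ
    set lam := g v / ℓ v with hlamdef
    have hrep : ∀ d : X, g d = lam * ℓ d := by
      intro d
      have hkd : ℓ (d - (ℓ d / ℓ v) • v) = 0 := by
        rw [map_sub, map_smul]
        rw [smul_eq_mul, div_mul_cancel₀ _ hv, sub_self]
      have := hker _ hkd
      rw [map_sub, map_smul, sub_eq_zero] at this
      rw [this, hlamdef]
      simp only [smul_eq_mul]
      field_simp
    have hlam0 : 0 ≤ lam := by
      rcases lt_trichotomy (ℓ v) 0 with hv' | hv' | hv'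
      · have := hmono (-v) (by rw [map_neg]; linarith)
        rw [map_neg] at this
        rw [hlamdef, div_nonneg_iff]
        exact Or.inr ⟨by linarith, le_of_lt hv'⟩
      · exact absurd hv' hv
      · have := hmono v (le_of_lt hv')
        exact div_nonneg this (le_of_lt hv')
    -- the subgradient
    have hℓ₀ : (-s)⁻¹ • g ∈ SubdiffE f xbar :=
      subdiff_of_sep f hbot α xbar hx g s hs
        (fun x r hr => le_trans (le_of_lt (hE1 x r hr)) (hM1 xbar (le_refl _)))
    -- lam ≠ 0
    have hlampos : 0 < lam := by
      rcases lt_or_eq_of_le hlam0 with h | h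
      · exact h
      exfalso
      have hg0 : ∀ d, g d = 0 := by
        intro d; rw [hrep d, ← h, zero_mul]
      have := hℓ₀ x₀
      rw [ContinuousLinearMap.smul_apply, ContinuousLinearMap.smul_apply,
        hg0 x₀, hg0 xbar, hx] at this
      simp only [smul_eq_mul, mul_zero, sub_zero, sub_self] at this
      rw [show (((0:ℝ)) : EReal) = (0 : EReal) by norm_cast, zero_add] at this
      exact absurd hx₀ (not_lt.mpr this)
    have hlamne : lam ≠ 0 := ne_of_gt hlampos
    clear_value lam
    refine ⟨(-s) / lam, le_of_lt (div_pos (by linarith) hlampos), (-s)⁻¹ • g, hℓ₀, ?_⟩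
    ext d
    simp only [ContinuousLinearMap.smul_apply, smul_eq_mul]
    rw [hrep d]
    have hsne : s ≠ 0 := by linarith
    field_simp
  · -- easy direction
    rintro ⟨t, ht, ℓ₀, hℓ₀, rfl⟩
    intro x hxC
    replace hxC : f x ≤ (α : EReal) := hxC
    have htop : f x ≠ ⊤ := by
      intro h; rw [h] at hxC; exact absurd hxC (by simp)
    obtain ⟨b, hb⟩ : ∃ b : ℝ, f x = (b : EReal) :=
      ⟨(f x).toReal, (EReal.coe_toReal htop (hbot x)).symm⟩
    have hba : b ≤ α := by rwa [hb, EReal.coe_le_coe_iff] at hxC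
    have := hℓ₀ x
    rw [hx, hb] at this
    have hreal : ℓ₀ x - ℓ₀ xbar + α ≤ b := by exact_mod_cast this
    have hle : ℓ₀ x ≤ ℓ₀ xbar := by linarith
    have hmul := mul_le_mul_of_nonneg_left hle ht
    simpa [ContinuousLinearMap.smul_apply, smul_eq_mul] using hmul
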